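/- Let 𝔯 be a totally real subspace of E, let T ∈ 𝔯, let W ∈ E be orthogonal to ℂ𝔯 = 𝔯 + J𝔯, and let b, y ∈ ℝ. Then the subspace exp(ad(bB+JT+W+yZ))(𝔯) of 𝔰 is totally real with respect to the ambient complex structure J of 𝔰. -/

import Mathlib

open scoped RealInnerProductSpace

noncomputable section

namespace CHn

/-- `E n` is `ℂ^{n-1}`, viewed as a real inner product space with `⟪U,V⟫ = Re⟪U,V⟫_ℂ`
and complex structure `JU = iU`. -/
abbrev E (n : ℕ) := EuclideanSpace ℂ (Fin (n - 1))

/-- The solvable part `𝔰 = 𝔞 ⊕ 𝔫` of the Iwasawa decomposition of `𝔰𝔲(1,n)`, modeled as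
`ℝB ⊕ E ⊕ ℝZ`; the element `(a, U, x)` represents `aB + U + xZ`. -/
abbrev S (n : ℕ) := ℝ × E n × ℝ

variable (n : ℕ)

/-- The vector `B`. -/
def B : S n := (1, 0, 0)

/-- The vector `Z`. -/
def Z : S n := (0, 0, 1)

/-- The inner product of `𝔰` (`B`, `Z` unit, orthogonal direct sum `ℝB ⊕ E ⊕ ℝZ`). -/
def sInner (X Y : S n) : ℝ := X.1 * Y.1 + ⟪X.2.1, Y.2.1⟫ + X.2.2 * Y.2.2

/-- The ambient complex structure on `𝔰`: `J(aB + U + xZ) = -xB + JU + aZ`. -/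
def Js : S n →ₗ[ℝ] S n where
  toFun X := (-X.2.2, Complex.I • X.2.1, X.1)
  map_add' X Y := by
    refine Prod.ext ?_ (Prod.ext ?_ ?_)
    · simp; ring
    · simp [smul_add]
    · simp
  map_smul' c X := by
    refine Prod.ext ?_ (Prod.ext ?_ ?_)
    · simp only [Prod.smul_fst, Prod.smul_snd, smul_eq_mul, RingHom.id_apply]; ring
    · simp [Prod.smul_fst, Prod.smul_snd, smul_comm c Complex.I]
    · simp

/-- The Lie bracket of `𝔰`:
`[aB + U + xZ, bB + V + yZ] = (1/2)(aV - bU) + (ay - bx + ⟪JU, V⟫)Z`. -/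
def bra (X Y : S n) : S n :=
  (0, (2⁻¹ : ℝ) • (X.1 • Y.2.1 - Y.1 • X.2.1),
    X.1 * Y.2.2 - Y.1 * X.2.2 + ⟪Complex.I • X.2.1, Y.2.1⟫)

/-- `ad(X) = [X, ·]`, a (continuous) linear endomorphism of `𝔰`. -/
def ad (X : S n) : S n →L[ℝ] S n :=
  LinearMap.toContinuousLinearMap
    { toFun := bra n X
      map_add' := fun Y Y' => by
        unfold bra
        refine Prod.ext ?_ (Prod.ext ?_ ?_)
        · simp
        · simp only [Prod.fst_add, Prod.snd_add]
          module
        · simp only [Prod.fst_add, Prod.snd_add, inner_add_right]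
          ring
      map_smul' := fun c Y => by
        unfold bra
        have h : ⟪Complex.I • X.2.1, c • Y.2.1⟫ = c * ⟪Complex.I • X.2.1, Y.2.1⟫ :=
          real_inner_smul_right _ _ _
        refine Prod.ext ?_ (Prod.ext ?_ ?_)
        · simp
        · simp only [Prod.smul_fst, Prod.smul_snd, smul_eq_mul, RingHom.id_apply]
          module
        · simp only [Prod.smul_fst, Prod.smul_snd, smul_eq_mul, h, RingHom.id_apply]
          ring }

/-- `exp(ad(X)) = Σ_{k ≥ 0} ad(X)^k / k!`. -/
def expAd (X : S n) : S n →L[ℝ] S n := NormedSpace.exp (ad n X)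

/-- `ρ(t) = (e^t - 1)/t` for `t ≠ 0`, `ρ(0) = 1`. -/
def rho (t : ℝ) : ℝ := if t = 0 then 1 else (Real.exp t - 1) / t

/-- The Iwasawa group `AN`, modeled as `G = ℝ × E × ℝ`. -/
abbrev G (n : ℕ) := ℝ × E n × ℝ

/-- The product of `G`:
`(a,P,p)·(b,Q,q) = (a+b, P + e^{a/2}Q, p + e^a q + (1/2)e^{a/2}⟪JP,Q⟫)`. -/
def gmul (g h : G n) : G n :=
  (g.1 + h.1, g.2.1 + Real.exp (g.1 / 2) • h.2.1,
    g.2.2 + Real.exp g.1 * h.2.2 + 2⁻¹ * Real.exp (g.1 / 2) * ⟪Complex.I • g.2.1, h.2.1⟫)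

/-- The Lie exponential `Exp : 𝔰 → G`, `Exp(cB + W + zZ) = (c, ρ(c/2)W, ρ(c)z)`. -/
def Exp (X : S n) : G n := (X.1, rho (X.1 / 2) • X.2.1, rho X.1 * X.2.2)

/-- The inclusion of `E` into `𝔰`. -/
def inE : E n →ₗ[ℝ] S n where
  toFun U := (0, U, 0)
  map_add' U V := by refine Prod.ext ?_ (Prod.ext ?_ ?_) <;> simp
  map_smul' c U := by refine Prod.ext ?_ (Prod.ext ?_ ?_) <;> simp

/-- A real subspace of `E` is totally real if `⟪Ju, v⟫ = 0` for all its elements. -/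
def TotallyRealE (V : Submodule ℝ (E n)) : Prop :=
  ∀ u ∈ V, ∀ v ∈ V, ⟪Complex.I • u, v⟫ = 0

/-- A real subspace of `E` is complex if it is `J`-invariant. -/
def IsComplexE (V : Submodule ℝ (E n)) : Prop :=
  ∀ u ∈ V, Complex.I • u ∈ V

/-- The maximal complex subspace `V ∩ JV` of a real subspace `V` of `E`. -/
def maxCE (V : Submodule ℝ (E n)) : Set (E n) := {w | w ∈ V ∧ Complex.I • w ∈ V}

/-- `V` is a CR subspace of `E` if the orthogonal complement in `V` of its maximal
complex subspace `V ∩ JV` is totally real. -/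
def IsCRE (V : Submodule ℝ (E n)) : Prop :=
  ∀ u ∈ V, ∀ v ∈ V, (∀ w ∈ maxCE n V, ⟪u, w⟫ = 0) →
    (∀ w ∈ maxCE n V, ⟪v, w⟫ = 0) → ⟪Complex.I • u, v⟫ = 0

/-- A subset of `𝔰` is totally real if `⟪Ju, v⟫ = 0` for all its elements. -/
def TotallyRealS (V : Set (S n)) : Prop := ∀ u ∈ V, ∀ v ∈ V, sInner n (Js n u) v = 0

/-- The maximal complex subspace `V ∩ JV` of a real subspace `V` of `𝔰`. -/
def maxCS (V : Set (S n)) : Set (S n) := {x | x ∈ V ∧ Js n x ∈ V}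

/-- `V` is a CR subspace of `𝔰` if the orthogonal complement in `V` of its maximal
complex subspace `V ∩ JV` is totally real. -/
def IsCRS (V : Set (S n)) : Prop :=
  ∀ u ∈ V, ∀ v ∈ V, (∀ w ∈ maxCS n V, sInner n u w = 0) →
    (∀ w ∈ maxCS n V, sInner n v w = 0) → sInner n (Js n u) v = 0


lemma ad_apply (X v : S n) : ad n X v = bra n X v := rfl

lemma pow_ad_apply (X : S n) (u : E n) (k : ℕ) :
    (((ad n X) ^ k) ((0, u, 0) : S n)).1 = 0 ∧
      (((ad n X) ^ k) ((0, u, 0) : S n)).2.1 = (X.1 / 2) ^ k • u := by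
  induction k with
  | zero => simp
  | succ k ih =>
    rw [pow_succ']
    set w := ((ad n X) ^ k) ((0, u, 0) : S n) with hw
    have h1 : (ad n X (((ad n X) ^ k) ((0, u, 0) : S n))).1 = 0 := rfl
    refine ⟨h1, ?_⟩
    show (bra n X w).2.1 = _
    rw [show (bra n X w).2.1 = (2⁻¹ : ℝ) • (X.1 • w.2.1 - w.1 • X.2.1) from rfl,
      ih.1, ih.2]
    rw [zero_smul, sub_zero, smul_smul, smul_smul]
    congr 1
    rw [pow_succ]
    ring

lemma expAd_apply_inE (X : S n) (u : E n) :
    (expAd n X ((0, u, 0) : S n)).1 = 0 ∧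
      (expAd n X ((0, u, 0) : S n)).2.1 = Real.exp (X.1 / 2) • u := by
  classical
  set A := ad n X with hA
  have hsum : Summable fun k : ℕ => ((k.factorial : ℝ)⁻¹ • A ^ k : S n →L[ℝ] S n) :=
    NormedSpace.expSeries_summable' A
  have happ : expAd n X ((0, u, 0) : S n)
      = ∑' k : ℕ, ((k.factorial : ℝ)⁻¹ • A ^ k) ((0, u, 0) : S n) := by
    rw [expAd, NormedSpace.exp_eq_tsum ℝ]
    exact (ContinuousLinearMap.apply ℝ (S n) ((0, u, 0) : S n)).map_tsum hsum
  have hsum' : Summable fun k : ℕ => ((k.factorial : ℝ)⁻¹ • A ^ k) ((0, u, 0) : S n) :=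
    hsum.map (ContinuousLinearMap.apply ℝ (S n) ((0, u, 0) : S n))
      (ContinuousLinearMap.apply ℝ (S n) ((0, u, 0) : S n)).continuous
  constructor
  · rw [happ]
    have := (ContinuousLinearMap.fst ℝ ℝ (E n × ℝ)).map_tsum hsum'
    rw [show ((∑' k : ℕ, ((k.factorial : ℝ)⁻¹ • A ^ k) ((0, u, 0) : S n)).1 : ℝ)
        = (ContinuousLinearMap.fst ℝ ℝ (E n × ℝ))
            (∑' k : ℕ, ((k.factorial : ℝ)⁻¹ • A ^ k) ((0, u, 0) : S n)) from rfl, this]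
    have hz : ∀ k : ℕ, (ContinuousLinearMap.fst ℝ ℝ (E n × ℝ))
        (((k.factorial : ℝ)⁻¹ • A ^ k) ((0, u, 0) : S n)) = 0 := by
      intro k
      show ((k.factorial : ℝ)⁻¹ • (A ^ k) ((0, u, 0) : S n)).1 = 0
      rw [Prod.smul_fst, (pow_ad_apply n X u k).1, smul_zero]
    simp only [hz, tsum_zero]
  · rw [happ]
    set P : S n →L[ℝ] E n :=
      (ContinuousLinearMap.fst ℝ (E n) ℝ).comp (ContinuousLinearMap.snd ℝ ℝ (E n × ℝ))
      with hP
    have := P.map_tsum hsum'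
    rw [show ((∑' k : ℕ, ((k.factorial : ℝ)⁻¹ • A ^ k) ((0, u, 0) : S n)).2.1 : E n)
        = P (∑' k : ℕ, ((k.factorial : ℝ)⁻¹ • A ^ k) ((0, u, 0) : S n)) from rfl, this]
    have hz : ∀ k : ℕ, P (((k.factorial : ℝ)⁻¹ • A ^ k) ((0, u, 0) : S n))
        = ((k.factorial : ℝ)⁻¹ * (X.1 / 2) ^ k) • u := by
      intro k
      show ((k.factorial : ℝ)⁻¹ • (A ^ k) ((0, u, 0) : S n)).2.1 = _
      rw [Prod.smul_snd, Prod.smul_fst, (pow_ad_apply n X u k).2, smul_smul]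
    simp only [hz]
    rw [Summable.tsum_smul_const ?_]
    · congr 1
      rw [Real.exp_eq_exp_ℝ, NormedSpace.exp_eq_tsum ℝ]
      simp [smul_eq_mul]
    · exact (NormedSpace.expSeries_summable' (𝕂 := ℝ) (X.1 / 2)).congr
        (fun k => by simp [smul_eq_mul])

/-- for `𝔯` totally real, `T ∈ 𝔯`, `W ⟂ ℂ𝔯`, `b, y ∈ ℝ`, the subspace
`exp(ad(bB+JT+W+yZ))(𝔯)` of `𝔰` is totally real w.r.t. the ambient complex structure. -/
theorem statement7 (n : ℕ) (hn : 2 ≤ n) (𝔯 : Submodule ℝ (E n)) (h𝔯 : TotallyRealE n 𝔯)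
    (T : E n) (hT : T ∈ 𝔯) (W : E n)
    (hW : ∀ u ∈ 𝔯, ⟪W, u⟫ = 0 ∧ ⟪W, Complex.I • u⟫ = 0) (b y : ℝ) :
    TotallyRealS n
      ((Submodule.map (expAd n ((b, Complex.I • T + W, y) : S n)).toLinearMap
        (Submodule.map (inE n) 𝔯) : Submodule ℝ (S n)) : Set (S n)) := by
  set X : S n := (b, Complex.I • T + W, y) with hX
  rintro x hx v hv
  simp only [SetLike.mem_coe, Submodule.mem_map] at hx hv
  obtain ⟨_, ⟨u, hu, rfl⟩, rfl⟩ := hx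
  obtain ⟨_, ⟨w, hw', rfl⟩, rfl⟩ := hv
  have hiu : inE n u = ((0, u, 0) : S n) := rfl
  have hiw : inE n w = ((0, w, 0) : S n) := rfl
  have h1 := expAd_apply_inE n X u
  have h2 := expAd_apply_inE n X w
  simp only [ContinuousLinearMap.coe_coe, hiu, hiw]
  show sInner n (Js n (expAd n X ((0, u, 0) : S n))) (expAd n X ((0, w, 0) : S n)) = 0
  set x := expAd n X ((0, u, 0) : S n)
  set v := expAd n X ((0, w, 0) : S n)
  have : sInner n (Js n x) v = -x.2.2 * v.1 + ⟪Complex.I • x.2.1, v.2.1⟫ + x.1 * v.2.2 := rfl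
  rw [this, h1.1, h1.2, h2.1, h2.2, zero_mul, add_zero, mul_zero, zero_add]
  exact h𝔯 _ (𝔯.smul_mem _ hu) _ (𝔯.smul_mem _ hw')

end CHn
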